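/- arXiv:alg-geom/9703030 — 3 statements merged into one kernel-verified Lean document; each statement's English description precedes it below -/
import Mathlib

section
/- The map sending t_i to 1 - x_i and t_i^{-1} to the power series ∑_{k≥0} x_i^k extends to an injective ring homomorphism from the Laurent polynomial ring Λ = ℤ[t_1^{±1},...,t_n^{±1}] into the formal power series ring P = ℤ[[x_1,...,x_n]] (the Magnus embedding). -/
open MonoidAlgebra

/-- The `i`-th standard generator `t_i` of the group ring
`Λ = ℤ[t_1^{±1},…,t_n^{±1}]` of the free abelian group `ℤ^n`. -/
noncomputable def laurentGen (n : ℕ) (i : Fin n) :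
    MonoidAlgebra ℤ (Multiplicative (Fin n → ℤ)) :=
  MonoidAlgebra.of ℤ (Multiplicative (Fin n → ℤ)) (Multiplicative.ofAdd (Pi.single i 1))

section Aux

variable {n : ℕ}

/-- The geometric series `∑_{k≥0} x_i^k` in `ℤ[[x_1,…,x_n]]`. -/
noncomputable def geomS (n : ℕ) (i : Fin n) : MvPowerSeries (Fin n) ℤ :=
  fun d => if d.support ⊆ {i} then 1 else 0

lemma coeff_geomS (i : Fin n) (d : Fin n →₀ ℕ) :
    MvPowerSeries.coeff d (geomS n i) = if d.support ⊆ {i} then 1 else 0 := rfl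

lemma coeff_X_mul' (i : Fin n) (f : MvPowerSeries (Fin n) ℤ) (d : Fin n →₀ ℕ) :
    MvPowerSeries.coeff d (MvPowerSeries.X i * f) =
      if Finsupp.single i 1 ≤ d then MvPowerSeries.coeff (d - Finsupp.single i 1) f
      else 0 := by
  classical
  rw [MvPowerSeries.coeff_mul]
  by_cases h : Finsupp.single i 1 ≤ d
  · rw [if_pos h]
    rw [Finset.sum_eq_single (Finsupp.single i 1, d - Finsupp.single i 1)]
    · rw [MvPowerSeries.coeff_X, if_pos rfl, one_mul]
    · rintro ⟨a, b⟩ hab hne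
      rw [MvPowerSeries.coeff_X]
      split_ifs with ha
      · exfalso
        apply hne
        subst ha
        rw [Finset.HasAntidiagonal.mem_antidiagonal] at hab
        have : b = d - Finsupp.single i 1 := by
          rw [← hab]; ext j; simp
        rw [this]
      · exact zero_mul _
    · intro hni
      exfalso
      apply hni
      rw [Finset.HasAntidiagonal.mem_antidiagonal]
      ext j
      have := h j
      simp only [Finsupp.add_apply, Finsupp.tsub_apply]
      omega
  · rw [if_neg h]
    apply Finset.sum_eq_zero
    rintro ⟨a, b⟩ hab
    rw [MvPowerSeries.coeff_X]
    split_ifs with ha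
    · exfalso
      apply h
      subst ha
      rw [Finset.HasAntidiagonal.mem_antidiagonal] at hab
      rw [← hab]
      exact le_add_of_nonneg_right (zero_le (a := b))
    · exact zero_mul _

lemma one_sub_X_mul_geomS (i : Fin n) :
    (1 - MvPowerSeries.X i) * geomS n i = 1 := by
  classical
  ext d
  rw [sub_mul, one_mul, map_sub, coeff_X_mul', coeff_geomS]
  rw [MvPowerSeries.coeff_one]
  by_cases hd : d = 0
  · subst hd
    simp
  · rw [if_neg hd]
    by_cases hs : d.support ⊆ {i}
    · have hdi : 1 ≤ d i := by
        rcases Finsupp.ne_iff.1 hd with ⟨j, hj⟩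
        simp only [Finsupp.coe_zero, Pi.zero_apply] at hj
        have hji : j = i := by simpa using hs (Finsupp.mem_support_iff.2 hj)
        subst hji; omega
      have hle : Finsupp.single i 1 ≤ d := by
        intro j
        by_cases hj : j = i
        · subst hj; simpa using hdi
        · simp [Finsupp.single_apply, Ne.symm hj]
      have h2 : (d - Finsupp.single i 1).support ⊆ {i} := by
        intro j hj
        rw [Finsupp.mem_support_iff] at hj
        have : d j ≠ 0 := by
          intro h0
          apply hj
          rw [Finsupp.tsub_apply, h0]
          simp
        exact hs (Finsupp.mem_support_iff.2 this)
      rw [if_pos hs, if_pos hle, coeff_geomS, if_pos h2, sub_self]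
    · rw [if_neg hs]
      obtain ⟨j, hjmem, hji⟩ : ∃ j ∈ d.support, j ∉ ({i} : Finset (Fin n)) := by
        by_contra hcon
        push_neg at hcon
        exact hs hcon
      simp only [Finset.mem_singleton] at hji
      split_ifs with hle
      · rw [coeff_geomS, if_neg, sub_zero]
        intro hsub
        have : j ∈ (d - Finsupp.single i 1).support := by
          rw [Finsupp.mem_support_iff, Finsupp.tsub_apply, Finsupp.single_apply,
            if_neg (Ne.symm hji)]
          simpa using Finsupp.mem_support_iff.1 hjmem
        have := hsub this
        simp at this
        exact hji this
      · rw [sub_zero]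

/-- `1 - x_i` as a unit of `ℤ[[x_1,…,x_n]]`. -/
noncomputable def oneSubX (n : ℕ) (i : Fin n) : (MvPowerSeries (Fin n) ℤ)ˣ :=
  ⟨1 - MvPowerSeries.X i, geomS n i, one_sub_X_mul_geomS i,
    by rw [mul_comm]; exact one_sub_X_mul_geomS i⟩

/-- The monoid hom `ℤ^n → (ℤ[[x]])ˣ`, `a ↦ ∏ (1-x_i)^{a_i}`. -/
noncomputable def magnusHom (n : ℕ) :
    Multiplicative (Fin n → ℤ) →* (MvPowerSeries (Fin n) ℤ)ˣ where
  toFun g := ∏ i, oneSubX n i ^ (Multiplicative.toAdd g i : ℤ)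
  map_one' := by simp
  map_mul' a b := by
    show (∏ i, oneSubX n i ^ (Multiplicative.toAdd (a * b) i : ℤ))
        = (∏ i, oneSubX n i ^ (Multiplicative.toAdd a i : ℤ))
          * ∏ i, oneSubX n i ^ (Multiplicative.toAdd b i : ℤ)
    rw [← Finset.prod_mul_distrib]
    refine Finset.prod_congr rfl fun i _ => ?_
    rw [show Multiplicative.toAdd (a * b) i
        = Multiplicative.toAdd a i + Multiplicative.toAdd b i from rfl, zpow_add]

lemma magnusHom_ofAdd_single (i : Fin n) :
    magnusHom n (Multiplicative.ofAdd (Pi.single i (1:ℤ))) = oneSubX n i := by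
  have h : magnusHom n (Multiplicative.ofAdd (Pi.single i (1:ℤ)))
      = ∏ j, oneSubX n j ^ (((Pi.single i (1:ℤ) : Fin n → ℤ) j : ℤ)) := rfl
  rw [h, Finset.prod_eq_single i]
  · simp
  · intro j _ hj
    rw [Pi.single_eq_of_ne hj, zpow_zero]
  · intro h; exact absurd (Finset.mem_univ i) h


/-- The substitution `x_i ↦ 1 - x_i` is an injective endomorphism of `ℤ[x_1,…,x_n]`. -/
lemma aeval_one_sub_X_injective (n : ℕ) :
    Function.Injective (MvPolynomial.aeval (R := ℤ)
      (fun i : Fin n => (1 - MvPolynomial.X i : MvPolynomial (Fin n) ℤ))) := by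
  set e : MvPolynomial (Fin n) ℤ →ₐ[ℤ] MvPolynomial (Fin n) ℤ := MvPolynomial.aeval
      (fun i : Fin n => (1 - MvPolynomial.X i : MvPolynomial (Fin n) ℤ)) with he
  have hcomp : e.comp e = AlgHom.id ℤ (MvPolynomial (Fin n) ℤ) := by
    apply MvPolynomial.algHom_ext
    intro i
    simp [he]
  have : Function.LeftInverse e e := by
    intro a
    have := congrArg (fun f => f a) (congrArg (fun (f : _ →ₐ[ℤ] _) => ⇑f) hcomp)
    simpa using this
  exact this.injective

/-- The composite `ℤ[x] → ℤ[x] → ℤ[[x]]`, `x_i ↦ 1 - x_i`. -/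
noncomputable def psiHom (n : ℕ) : MvPolynomial (Fin n) ℤ →+* MvPowerSeries (Fin n) ℤ :=
  (MvPolynomial.coeToMvPowerSeries.ringHom).comp
    (MvPolynomial.aeval
      (fun i : Fin n => (1 - MvPolynomial.X i : MvPolynomial (Fin n) ℤ))).toRingHom

lemma psiHom_injective (n : ℕ) : Function.Injective (psiHom n) := by
  rw [psiHom, RingHom.coe_comp]
  exact (MvPolynomial.coe_injective (Fin n) ℤ).comp (aeval_one_sub_X_injective n)

lemma psiHom_monomial (m : Fin n →₀ ℕ) :
    psiHom n (MvPolynomial.monomial m (1 : ℤ))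
      = ∏ i, (1 - MvPowerSeries.X i : MvPowerSeries (Fin n) ℤ) ^ (m i) := by
  rw [psiHom, RingHom.comp_apply]
  show MvPolynomial.coeToMvPowerSeries.ringHom
      (MvPolynomial.aeval (fun i : Fin n => (1 - MvPolynomial.X i : MvPolynomial (Fin n) ℤ))
        (MvPolynomial.monomial m (1:ℤ))) = _
  rw [MvPolynomial.aeval_monomial, map_one, one_mul, Finsupp.prod_pow, map_prod]
  refine Finset.prod_congr rfl fun i _ => ?_
  rw [map_pow, map_sub, map_one, MvPolynomial.coeToMvPowerSeries.ringHom_apply,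
    MvPolynomial.coe_X]

lemma magnus_injective (n : ℕ) : Function.Injective
    ⇑(MonoidAlgebra.lift ℤ (MvPowerSeries (Fin n) ℤ) (Multiplicative (Fin n → ℤ))
      ((Units.coeHom (MvPowerSeries (Fin n) ℤ)).comp (magnusHom n))) := by
  classical
  set G := Multiplicative (Fin n → ℤ)
  set A := MvPowerSeries (Fin n) ℤ
  set F : G →* A := (Units.coeHom A).comp (magnusHom n) with hF
  set φ := MonoidAlgebra.lift ℤ A G F with hφ
  rw [injective_iff_map_eq_zero]
  intro x hx
  set s : Finset G := x.coeff.support with hs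
  set N : Fin n → ℕ := fun i => s.sup fun g => (-(Multiplicative.toAdd g i)).toNat with hNdef
  have hN : ∀ g ∈ s, ∀ i, (0:ℤ) ≤ Multiplicative.toAdd g i + N i := by
    intro g hg i
    have h1 : (-(Multiplicative.toAdd g i)).toNat ≤ N i :=
      Finset.le_sup (f := fun g => (-(Multiplicative.toAdd g i)).toNat) hg
    have h2 : -(Multiplicative.toAdd g i) ≤ ((-(Multiplicative.toAdd g i)).toNat : ℤ) :=
      Int.self_le_toNat _
    have h3 : ((-(Multiplicative.toAdd g i)).toNat : ℤ) ≤ (N i : ℤ) := by exact_mod_cast h1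
    omega
  set b : G → (Fin n →₀ ℕ) := fun g =>
    Finsupp.equivFunOnFinite.symm fun i => (Multiplicative.toAdd g i + N i).toNat with hbdef
  have hb : ∀ g ∈ s, ∀ i, ((b g i : ℤ)) = Multiplicative.toAdd g i + N i := by
    intro g hg i
    have : b g i = (Multiplicative.toAdd g i + N i).toNat := rfl
    rw [this, Int.toNat_of_nonneg (hN g hg i)]
  have binj : ∀ g ∈ s, ∀ g' ∈ s, b g = b g' → g = g' := by
    intro g hg g' hg' hbb
    have : ∀ i, Multiplicative.toAdd g i = Multiplicative.toAdd g' i := by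
      intro i
      have h1 := hb g hg i
      have h2 := hb g' hg' i
      rw [hbb] at h1
      omega
    exact funext this
  set U : Aˣ := ∏ i, oneSubX n i ^ (N i : ℤ) with hU
  have key : ∀ g ∈ s, psiHom n (MvPolynomial.monomial (b g) (1:ℤ))
      = ↑(magnusHom n g) * ↑U := by
    intro g hg
    rw [psiHom_monomial]
    have h1 : (∏ i, oneSubX n i ^ ((b g i : ℤ)) : Aˣ) = magnusHom n g * U := by
      rw [hU]
      have : ∀ i ∈ Finset.univ, oneSubX n i ^ ((b g i : ℤ))
          = oneSubX n i ^ (Multiplicative.toAdd g i : ℤ) * oneSubX n i ^ ((N i : ℕ) : ℤ) := by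
        intro i _
        rw [hb g hg i, zpow_add]
      rw [Finset.prod_congr rfl this, Finset.prod_mul_distrib]
      rfl
    have h2 : ((∏ i, oneSubX n i ^ ((b g i : ℤ)) : Aˣ) : A)
        = ∏ i, (1 - MvPowerSeries.X i : A) ^ (b g i) := by
      rw [show ((∏ i, oneSubX n i ^ ((b g i : ℤ)) : Aˣ) : A)
          = (Units.coeHom A) (∏ i, oneSubX n i ^ ((b g i : ℤ))) from rfl, map_prod]
      refine Finset.prod_congr rfl fun i _ => ?_
      rw [Units.coeHom_apply, zpow_natCast, Units.val_pow_eq_pow_val]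
      rfl
    rw [← h2, h1, Units.val_mul]
  set p : MvPolynomial (Fin n) ℤ :=
    ∑ g ∈ s, MvPolynomial.monomial (b g) (x.coeff g) with hp
  have hψp : psiHom n p = 0 := by
    rw [hp, map_sum]
    have : ∀ g ∈ s, psiHom n (MvPolynomial.monomial (b g) (x.coeff g))
        = x.coeff g • (↑(magnusHom n g) * (U : A)) := by
      intro g hg
      have hm : MvPolynomial.monomial (b g) (x.coeff g) = x.coeff g • MvPolynomial.monomial (b g) (1:ℤ) := by
        rw [MvPolynomial.smul_monomial, smul_eq_mul, mul_one]
      rw [hm, map_zsmul, key g hg]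
    rw [Finset.sum_congr rfl this]
    have : ∑ g ∈ s, x.coeff g • (↑(magnusHom n g) * (U : A))
        = (∑ g ∈ s, x.coeff g • (↑(magnusHom n g) : A)) * (U : A) := by
      rw [Finset.sum_mul]
      exact Finset.sum_congr rfl fun g _ => (smul_mul_assoc _ _ _).symm
    rw [this]
    have hφx : (∑ g ∈ s, x.coeff g • ((magnusHom n g : A))) = φ x := by
      rw [hφ, MonoidAlgebra.lift_apply]
      rfl
    rw [hφx, hx, zero_mul]
  have hp0 : p = 0 := psiHom_injective n (by rw [hψp, map_zero])
  ext g
  by_cases hg : g ∈ s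
  · have hcoeff : MvPolynomial.coeff (b g) p = x.coeff g := by
      rw [hp, MvPolynomial.coeff_sum]
      rw [Finset.sum_eq_single g]
      · rw [MvPolynomial.coeff_monomial, if_pos rfl]
      · intro g' hg' hne
        rw [MvPolynomial.coeff_monomial, if_neg]
        intro hbb
        exact hne (binj g' hg' g hg hbb)
      · intro h; exact absurd hg h
    rw [hp0, MvPolynomial.coeff_zero] at hcoeff
    exact hcoeff.symm
  · exact (Finsupp.notMem_support_iff.1 hg)

end Aux

/-- The Magnus embedding: the assignment `t_i ↦ 1 - x_i` (with `t_i^{-1}` going to the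
geometric series `∑_{k≥0} x_i^k`) extends to an injective ring homomorphism from the
Laurent polynomial ring `Λ = ℤ[t_1^{±1},…,t_n^{±1}]` (the group ring of `ℤ^n`) into the
formal power series ring `P = ℤ[[x_1,…,x_n]]`. -/
theorem magnus_embedding_exists (n : ℕ) :
    ∃ φ : MonoidAlgebra ℤ (Multiplicative (Fin n → ℤ)) →+* MvPowerSeries (Fin n) ℤ,
      Function.Injective φ ∧
      (∀ i : Fin n, φ (laurentGen n i) = 1 - MvPowerSeries.X i) ∧
      (∀ (i : Fin n) (d : Fin n →₀ ℕ),
        MvPowerSeries.coeff d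
          (φ (MonoidAlgebra.of ℤ (Multiplicative (Fin n → ℤ))
            (Multiplicative.ofAdd (Pi.single i 1))⁻¹)) =
          if d.support ⊆ {i} then 1 else 0) := by
  classical
  set G := Multiplicative (Fin n → ℤ)
  set A := MvPowerSeries (Fin n) ℤ
  set F : G →* A := (Units.coeHom A).comp (magnusHom n) with hF
  set φa := MonoidAlgebra.lift ℤ A G F with hφa
  refine ⟨φa.toRingHom, ?_, ?_, ?_⟩
  · exact magnus_injective n
  · intro i
    show φa (laurentGen n i) = _
    rw [laurentGen, MonoidAlgebra.lift_of, hF, MonoidHom.comp_apply,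
      magnusHom_ofAdd_single, Units.coeHom_apply]
    rfl
  · intro i d
    show MvPowerSeries.coeff d (φa (MonoidAlgebra.of ℤ G _)) = _
    rw [MonoidAlgebra.lift_of, hF, MonoidHom.comp_apply, map_inv,
      magnusHom_ofAdd_single, Units.coeHom_apply]
    exact coeff_geomS i d
end

section
/- Chain rule of Fox calculus: for endomorphisms α, β of the free group F_n, the Fox Jacobians satisfy J(α·β) = β̃(J(α)) · J(β), where α·β denotes β ∘ α and β̃ is the extension of β to the group ring applied entrywise. -/
/-- The augmentation map `ε : ℤF_n → ℤ`. -/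
noncomputable def augFree (n : ℕ) : MonoidAlgebra ℤ (FreeGroup (Fin n)) →ₐ[ℤ] ℤ :=
  (MonoidAlgebra.lift ℤ ℤ (FreeGroup (Fin n))) 1

/-- A family `d : Fin n → ℤF_n` is the Fox gradient of `w ∈ ℤF_n` if it satisfies the
fundamental formula `w - ε(w) = ∑_i d_i (t_i - 1)`. -/
def IsFoxGradient (n : ℕ) (w : MonoidAlgebra ℤ (FreeGroup (Fin n)))
    (d : Fin n → MonoidAlgebra ℤ (FreeGroup (Fin n))) : Prop :=
  w - algebraMap ℤ (MonoidAlgebra ℤ (FreeGroup (Fin n))) (augFree n w) =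
    ∑ i : Fin n, d i * (MonoidAlgebra.of ℤ (FreeGroup (Fin n)) (FreeGroup.of i) - 1)

/-- A matrix `J : Fin n → Fin n → ℤF_n` is the Fox Jacobian of an endomorphism `α` of
`F_n` if its `i`-th row is the Fox gradient of `α(t_i)`. -/
def IsFoxJacobian (n : ℕ) (α : FreeGroup (Fin n) →* FreeGroup (Fin n))
    (J : Fin n → Fin n → MonoidAlgebra ℤ (FreeGroup (Fin n))) : Prop :=
  ∀ i : Fin n, IsFoxGradient n (MonoidAlgebra.of ℤ (FreeGroup (Fin n)) (α (FreeGroup.of i))) (J i)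

/-- Chain rule of Fox calculus: for endomorphisms `α, β` of `F_n` with Fox Jacobians
`J(α), J(β)`, the matrix `β̃(J(α))·J(β)` is the Fox Jacobian of `α·β = β∘α`, where
`β̃` is the ring-homomorphism extension of `β` to `ℤF_n`, applied entrywise. -/
theorem fox_calculus_chain_rule (n : ℕ)
    (α β : FreeGroup (Fin n) →* FreeGroup (Fin n))
    (Jα Jβ : Fin n → Fin n → MonoidAlgebra ℤ (FreeGroup (Fin n)))
    (hα : IsFoxJacobian n α Jα) (hβ : IsFoxJacobian n β Jβ) :
    IsFoxJacobian n (β.comp α) (fun i k =>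
      ∑ j : Fin n, MonoidAlgebra.mapDomainRingHom ℤ β (Jα i j) * Jβ j k) := by
  intro i
  have hg : ∀ g : FreeGroup (Fin n),
      augFree n (MonoidAlgebra.of ℤ (FreeGroup (Fin n)) g) = 1 := by
    intro g; simp [augFree]
  have hB : ∀ g : FreeGroup (Fin n),
      MonoidAlgebra.mapDomainRingHom ℤ β (MonoidAlgebra.of ℤ (FreeGroup (Fin n)) g) =
        MonoidAlgebra.of ℤ (FreeGroup (Fin n)) (β g) := by
    intro g
    simp [MonoidAlgebra.mapDomainRingHom, MonoidAlgebra.of_apply,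
      Finsupp.mapDomain_single]
  have hβ' : ∀ j : Fin n,
      MonoidAlgebra.of ℤ (FreeGroup (Fin n)) (β (FreeGroup.of j)) - 1 =
        ∑ k : Fin n, Jβ j k *
          (MonoidAlgebra.of ℤ (FreeGroup (Fin n)) (FreeGroup.of k) - 1) := by
    intro j
    have h := hβ j
    unfold IsFoxGradient at h
    rwa [hg, map_one] at h
  have h1 := congrArg (MonoidAlgebra.mapDomainRingHom ℤ β) (hα i)
  unfold IsFoxGradient at h1 ⊢
  simp only [hg, map_one, map_sub, map_sum, map_mul, hB, MonoidHom.comp_apply] at h1 ⊢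
  rw [h1]
  simp only [hβ', Finset.mul_sum]
  rw [Finset.sum_comm]
  refine Finset.sum_congr rfl fun k _ => ?_
  rw [Finset.sum_mul]
  refine Finset.sum_congr rfl fun j _ => ?_
  exact (mul_assoc _ _ _).symm
end

section
/- In the Koszul complex of the Laurent polynomial ring Λ (the standard free Λ-resolution of ℤ with C_k = Λ^{C(n,k)} and differentials d_k(e_J) = ∑_r (−1)^{k+r}(t_{j_r} − 1) e_{J∖{j_r}}), for an IA-automorphism α of F_n the maps Θ_k(α) = Λ^k Θ(α) form a chain map: d_k ∘ Θ_k(α) = Θ_{k−1}(α) ∘ d_k for all 1 ≤ k ≤ n. -/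
/-- An automorphism of `F_n` is an IA-automorphism if it induces the identity on the
abelianization `ℤ^n`. -/
def IsIA (n : ℕ) (α : MulAut (FreeGroup (Fin n))) : Prop :=
  ∀ x : FreeGroup (Fin n), Abelianization.of (α x) = Abelianization.of x

/-- The ring homomorphism `ℤF_n → Λ = ℤℤ^n` induced by abelianization. -/
noncomputable def abRing (n : ℕ) :
    MonoidAlgebra ℤ (FreeGroup (Fin n)) →+*
      MonoidAlgebra ℤ (Abelianization (FreeGroup (Fin n))) :=
  MonoidAlgebra.mapDomainRingHom ℤ (Abelianization.of (G := FreeGroup (Fin n)))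

/-- The image `t_i` of the `i`-th free generator in `Λ`. -/
noncomputable def tGen (n : ℕ) (i : Fin n) :
    MonoidAlgebra ℤ (Abelianization (FreeGroup (Fin n))) :=
  MonoidAlgebra.of ℤ (Abelianization (FreeGroup (Fin n))) (Abelianization.of (FreeGroup.of i))

/-- `KC n k` is the term `C_k = Λ^{C(n,k)}` of the Koszul complex of `Λ`, with basis
`e_J` indexed by `k`-element subsets `J ⊆ {1,…,n}`, realized in coordinates. -/
abbrev KC (n k : ℕ) :=
  {s : Finset (Fin n) // s.card = k} → MonoidAlgebra ℤ (Abelianization (FreeGroup (Fin n)))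

/-- The Koszul differential `d_{k+1} : C_{k+1} → C_k`, given on basis elements by
`d(e_J) = ∑_r (-1)^{|J|+r} (t_{j_r} - 1) e_{J∖{j_r}}` (here expressed on coordinates). -/
noncomputable def koszulD (n k : ℕ) (v : KC n (k + 1)) : KC n k := fun K =>
  ∑ j : Fin n, if h : j ∈ K.val then 0 else
    ((-1 : MonoidAlgebra ℤ (Abelianization (FreeGroup (Fin n)))) ^
        (k + (K.val.filter (· < j)).card)) * (tGen n j - 1) *
      v ⟨insert j K.val, by rw [Finset.card_insert_of_notMem h, K.2]⟩

/-- The `k`-th exterior power `Θ_k = Λ^k Θ` of an `n×n` matrix `Θ` over `Λ`, acting on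
`C_k` in coordinates: the matrix entry at `(J, K)` is the minor `det Θ[J, K]`. -/
noncomputable def extPow (n k : ℕ)
    (Θ : Fin n → Fin n → MonoidAlgebra ℤ (Abelianization (FreeGroup (Fin n))))
    (v : KC n k) : KC n k := fun K =>
  ∑ J : {s : Finset (Fin n) // s.card = k},
    (Matrix.of fun a b : Fin k =>
      Θ ((J.val.orderIsoOfFin J.2) a : Fin n) ((K.val.orderIsoOfFin K.2) b : Fin n)).det * v J

namespace MagnusChainAux

open Finset

lemma fin_card_filter_lt {k : ℕ} (a : Fin k) :
    ((univ : Finset (Fin k)).filter (· < a)).card = a.val := by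
  have h : (univ : Finset (Fin k)).filter (· < a) = Finset.Iio a := by
    ext x; simp
  rw [h, Fin.card_Iio]

lemma exists_orderEmbOfFin_eq {n : ℕ} {s : Finset (Fin n)} {k : ℕ} (hs : s.card = k) {x : Fin n}
    (hx : x ∈ s) : ∃ a : Fin k, s.orderEmbOfFin hs a = x := by
  have h := s.range_orderEmbOfFin hs
  have : x ∈ Set.range (s.orderEmbOfFin hs) := h ▸ Finset.mem_coe.mpr hx
  exact this

lemma rank_orderEmbOfFin {n : ℕ} {s : Finset (Fin n)} {k : ℕ} (hs : s.card = k) (a : Fin k) :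
    (s.filter (· < s.orderEmbOfFin hs a)).card = a.val := by
  have himg : s.filter (· < s.orderEmbOfFin hs a)
      = (univ.filter (· < a)).image (s.orderEmbOfFin hs) := by
    ext x
    simp only [mem_filter, mem_image, mem_univ, true_and]
    constructor
    · rintro ⟨hxs, hlt⟩
      obtain ⟨c, rfl⟩ := exists_orderEmbOfFin_eq hs hxs
      exact ⟨c, (s.orderEmbOfFin hs).strictMono.lt_iff_lt.mp hlt, rfl⟩
    · rintro ⟨c, hc, rfl⟩
      exact ⟨s.orderEmbOfFin_mem hs c, (s.orderEmbOfFin hs).strictMono hc⟩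
  rw [himg, Finset.card_image_of_injective _ (s.orderEmbOfFin hs).injective, fin_card_filter_lt]

lemma orderEmbOfFin_congr {n : ℕ} {s t : Finset (Fin n)} (hst : s = t) {k : ℕ}
    (hs : s.card = k) (ht : t.card = k) (b : Fin k) :
    s.orderEmbOfFin hs b = t.orderEmbOfFin ht b := by subst hst; rfl

lemma orderEmbOfFin_erase {n m : ℕ} {J : Finset (Fin n)} (hJ : J.card = m + 1) (a : Fin (m + 1))
    (h : (J.erase (J.orderEmbOfFin hJ a)).card = m) (b : Fin m) :
    (J.erase (J.orderEmbOfFin hJ a)).orderEmbOfFin h b = J.orderEmbOfFin hJ (a.succAbove b) := by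
  have key := Finset.orderEmbOfFin_unique h
      (f := fun b => J.orderEmbOfFin hJ (a.succAbove b)) ?_ ?_
  · exact (congrFun key b).symm
  · intro x
    exact Finset.mem_erase.mpr ⟨(J.orderEmbOfFin hJ).injective.ne (Fin.succAbove_ne a x),
      J.orderEmbOfFin_mem hJ _⟩
  · exact (J.orderEmbOfFin hJ).strictMono.comp (Fin.strictMono_succAbove a)

lemma orderEmbOfFin_insert {n m : ℕ} {K : Finset (Fin n)} (hK : K.card = m) {j : Fin n}
    (hj : j ∉ K) (h1 : (insert j K).card = m + 1) :
    ∃ a : Fin (m + 1), (insert j K).orderEmbOfFin h1 a = j ∧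
      (a : ℕ) = (K.filter (· < j)).card ∧
      ∀ b : Fin m, (insert j K).orderEmbOfFin h1 (a.succAbove b) = K.orderEmbOfFin hK b := by
  obtain ⟨a, ha⟩ := exists_orderEmbOfFin_eq h1 (Finset.mem_insert_self j K)
  refine ⟨a, ha, ?_, ?_⟩
  · have h2 : (insert j K).filter (· < j) = K.filter (· < j) := by
      rw [Finset.filter_insert, if_neg (by simp)]
    have := rank_orderEmbOfFin h1 a
    rw [ha, h2] at this
    exact this.symm
  · intro b
    have he : (insert j K).erase ((insert j K).orderEmbOfFin h1 a) = K := by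
      rw [ha]; exact Finset.erase_insert hj
    have hc2 : ((insert j K).erase ((insert j K).orderEmbOfFin h1 a)).card = m := by
      rw [he, hK]
    rw [← orderEmbOfFin_erase h1 a hc2 b]
    exact orderEmbOfFin_congr he hc2 hK b

lemma key_det {R : Type*} [CommRing R] {n m : ℕ} (Θ : Fin n → Fin n → R) (c : Fin n → R)
    (hc : ∀ i, (∑ j, Θ i j * c j) = c i)
    (J K : Finset (Fin n)) (hJ : J.card = m + 1) (hK : K.card = m) :
    (∑ j : Fin n, if h : j ∈ K then (0 : R) else
        (-1 : R) ^ (m + (K.filter (· < j)).card) * c j *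
          (Matrix.of fun a b => Θ (J.orderEmbOfFin hJ a)
            ((insert j K).orderEmbOfFin
              (by rw [Finset.card_insert_of_notMem h, hK]) b)).det)
      = ∑ a : Fin (m + 1), (-1 : R) ^ (m + (a : ℕ)) * c (J.orderEmbOfFin hJ a) *
          (Matrix.of fun x b =>
            Θ (J.orderEmbOfFin hJ (a.succAbove x)) (K.orderEmbOfFin hK b)).det := by
  classical
  set eJ := J.orderEmbOfFin hJ with heJ
  set eK := K.orderEmbOfFin hK with heK
  have hcnt : ∀ j : Fin n, (K.filter (· < j)).card < m + 1 := fun j =>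
    Nat.lt_succ_of_le (hK ▸ Finset.card_filter_le K _)
  set P : Fin n → Fin (m + 1) := fun j => ⟨(K.filter (· < j)).card, hcnt j⟩ with hP
  set N : Fin n → Matrix (Fin (m + 1)) (Fin (m + 1)) R := fun j =>
    Matrix.of fun x => (P j).insertNth (Θ (eJ x) j) (fun b => Θ (eJ x) (eK b)) with hN
  set D : Fin (m + 1) → R := fun a =>
    (Matrix.of fun x b => Θ (eJ (a.succAbove x)) (eK b)).det with hD
  have hexp : ∀ j, (N j).det = ∑ x : Fin (m + 1),
      (-1 : R) ^ ((x : ℕ) + ((P j) : ℕ)) * Θ (eJ x) j * D x := by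
    intro j
    rw [Matrix.det_succ_column (N j) (P j)]
    refine Finset.sum_congr rfl fun x _ => ?_
    congr 1
    · congr 1
      simp only [hN, Matrix.of_apply, Fin.insertNth_apply_same]
    · rw [hD]
      congr 1
      ext x' b
      simp only [hN, Matrix.of_apply, Matrix.submatrix_apply, Fin.insertNth_apply_succAbove]
  have hzero : ∀ j ∈ K, (N j).det = 0 := by
    intro j hj
    obtain ⟨q, hq⟩ := exists_orderEmbOfFin_eq hK hj
    refine Matrix.det_zero_of_column_eq (i := (P j).succAbove q) (j := P j)
      (Fin.succAbove_ne _ _) fun x => ?_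
    simp only [hN, Matrix.of_apply, Fin.insertNth_apply_succAbove, Fin.insertNth_apply_same]
    rw [heK, hq]
  have hins : ∀ (j : Fin n) (h : j ∉ K),
      (Matrix.of fun a b => Θ (eJ a)
        ((insert j K).orderEmbOfFin (by rw [Finset.card_insert_of_notMem h, hK]) b)).det
        = (N j).det := by
    intro j hj
    have h1 : (insert j K).card = m + 1 := by rw [Finset.card_insert_of_notMem hj, hK]
    obtain ⟨a, ha, hav, hsucc⟩ := orderEmbOfFin_insert hK hj h1
    have haP : a = P j := Fin.ext (by rw [hav])
    congr 1
    ext x y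
    simp only [Matrix.of_apply, hN]
    by_cases hy : y = P j
    · subst hy
      rw [Fin.insertNth_apply_same, ← haP, ha]
    · obtain ⟨b, rfl⟩ := Fin.exists_succAbove_eq hy
      rw [Fin.insertNth_apply_succAbove, ← haP, hsucc b, heK]

  calc (∑ j : Fin n, if h : j ∈ K then (0 : R) else
        (-1 : R) ^ (m + (K.filter (· < j)).card) * c j *
          (Matrix.of fun a b => Θ (eJ a)
            ((insert j K).orderEmbOfFin
              (by rw [Finset.card_insert_of_notMem h, hK]) b)).det)
      = ∑ j : Fin n, (-1 : R) ^ (m + ((P j) : ℕ)) * c j * (N j).det := by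
        refine Finset.sum_congr rfl fun j _ => ?_
        by_cases hj : j ∈ K
        · rw [dif_pos hj, hzero j hj, mul_zero]
        · rw [dif_neg hj, hins j hj]
    _ = ∑ j : Fin n, ∑ x : Fin (m + 1),
          (-1 : R) ^ (m + ((P j) : ℕ)) * c j *
            ((-1 : R) ^ ((x : ℕ) + ((P j) : ℕ)) * Θ (eJ x) j * D x) := by
        refine Finset.sum_congr rfl fun j _ => ?_
        rw [hexp j, Finset.mul_sum]
    _ = ∑ x : Fin (m + 1), ∑ j : Fin n,
          (-1 : R) ^ (m + ((P j) : ℕ)) * c j *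
            ((-1 : R) ^ ((x : ℕ) + ((P j) : ℕ)) * Θ (eJ x) j * D x) := Finset.sum_comm
    _ = ∑ a : Fin (m + 1), (-1 : R) ^ (m + (a : ℕ)) * c (eJ a) * D a := by
        refine Finset.sum_congr rfl fun x _ => ?_
        have hterm : ∀ j : Fin n,
            (-1 : R) ^ (m + ((P j) : ℕ)) * c j *
              ((-1 : R) ^ ((x : ℕ) + ((P j) : ℕ)) * Θ (eJ x) j * D x)
            = (-1 : R) ^ (m + (x : ℕ)) * (Θ (eJ x) j * c j) * D x := by
          intro j
          have hsgn : (-1 : R) ^ (m + ((P j) : ℕ)) * (-1 : R) ^ ((x : ℕ) + ((P j) : ℕ))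
              = (-1 : R) ^ (m + (x : ℕ)) := by
            rw [← pow_add]
            have he : m + ((P j) : ℕ) + ((x : ℕ) + ((P j) : ℕ))
                = (m + (x : ℕ)) + 2 * ((P j) : ℕ) := by ring
            rw [he, pow_add, pow_mul, neg_one_sq, one_pow, mul_one]
          calc (-1 : R) ^ (m + ((P j) : ℕ)) * c j *
              ((-1 : R) ^ ((x : ℕ) + ((P j) : ℕ)) * Θ (eJ x) j * D x)
              = ((-1 : R) ^ (m + ((P j) : ℕ)) * (-1 : R) ^ ((x : ℕ) + ((P j) : ℕ))) *
                (Θ (eJ x) j * c j) * D x := by ring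
            _ = (-1 : R) ^ (m + (x : ℕ)) * (Θ (eJ x) j * c j) * D x := by rw [hsgn]
        rw [Finset.sum_congr rfl fun j _ => hterm j]
        rw [← Finset.sum_mul, ← Finset.mul_sum, hc (eJ x)]

/-- Generic form of `KC`. -/
abbrev gKC (R : Type*) (n k : ℕ) := {s : Finset (Fin n) // s.card = k} → R

/-- Generic Koszul differential. -/
noncomputable def gD {R : Type*} [CommRing R] {n : ℕ} (c : Fin n → R) (k : ℕ)
    (v : gKC R n (k + 1)) : gKC R n k := fun K =>
  ∑ j : Fin n, if h : j ∈ K.val then 0 else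
    ((-1 : R) ^ (k + (K.val.filter (· < j)).card)) * c j *
      v ⟨insert j K.val, by rw [Finset.card_insert_of_notMem h, K.2]⟩

/-- Generic exterior power action. -/
noncomputable def gE {R : Type*} [CommRing R] {n : ℕ}
    (Θ : Fin n → Fin n → R) (k : ℕ) (v : gKC R n k) : gKC R n k := fun K =>
  ∑ J : {s : Finset (Fin n) // s.card = k},
    (Matrix.of fun a b : Fin k =>
      Θ (J.val.orderEmbOfFin J.2 a) (K.val.orderEmbOfFin K.2 b)).det * v J

theorem gChain {R : Type*} [CommRing R] {n : ℕ} (Θ : Fin n → Fin n → R) (c : Fin n → R)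
    (hc : ∀ i, (∑ j, Θ i j * c j) = c i) (m : ℕ) (v : gKC R n (m + 1)) :
    gD c m (gE Θ (m + 1) v) = gE Θ m (gD c m v) := by
  classical
  funext KK
  obtain ⟨K, hK⟩ := KK
  set W : Finset (Fin n) → R := fun s => if h : s.card = m + 1 then v ⟨s, h⟩ else 0 with hW
  have hWv : ∀ (s : Finset (Fin n)) (h : s.card = m + 1), v ⟨s, h⟩ = W s := by
    intro s h; rw [hW]; simp only [dif_pos h]
  -- the middle form, as a sum over a sigma type
  set F : (Σ _ : {s : Finset (Fin n) // s.card = m + 1}, Fin (m + 1)) → R := fun x =>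
    ((-1 : R) ^ (m + (x.2 : ℕ)) * c (x.1.val.orderEmbOfFin x.1.2 x.2) *
      (Matrix.of fun x' b =>
        Θ (x.1.val.orderEmbOfFin x.1.2 (x.2.succAbove x')) (K.orderEmbOfFin hK b)).det)
      * W x.1.val with hF
  set G : (Σ _ : {s : Finset (Fin n) // s.card = m}, Fin n) → R := fun y =>
    (Matrix.of fun a b =>
      Θ (y.1.val.orderEmbOfFin y.1.2 a) (K.orderEmbOfFin hK b)).det *
      ((-1 : R) ^ (m + (y.1.val.filter (· < y.2)).card) * c y.2 * W (insert y.2 y.1.val))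
    with hG
  have lhs_eq : gD c m (gE Θ (m + 1) v) ⟨K, hK⟩
      = ∑ x ∈ (univ : Finset {s : Finset (Fin n) // s.card = m + 1}).sigma
          (fun _ => (univ : Finset (Fin (m + 1)))), F x := by
    rw [Finset.sum_sigma]
    show (∑ j : Fin n, if h : j ∈ K then 0 else
        (-1 : R) ^ (m + (K.filter (· < j)).card) * c j *
          gE Θ (m + 1) v ⟨insert j K, by rw [Finset.card_insert_of_notMem h, hK]⟩) = _
    have step1 : ∀ j : Fin n,
        (if h : j ∈ K then (0:R) else
          (-1 : R) ^ (m + (K.filter (· < j)).card) * c j *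
            gE Θ (m + 1) v ⟨insert j K, by rw [Finset.card_insert_of_notMem h, hK]⟩)
        = ∑ J : {s : Finset (Fin n) // s.card = m + 1},
            (if h : j ∈ K then (0:R) else
              (-1 : R) ^ (m + (K.filter (· < j)).card) * c j *
                (Matrix.of fun a b => Θ (J.val.orderEmbOfFin J.2 a)
                  ((insert j K).orderEmbOfFin
                    (by rw [Finset.card_insert_of_notMem h, hK]) b)).det) * v J := by
      intro j
      by_cases h : j ∈ K
      · simp [h]
      · rw [dif_neg h]
        simp only [dif_neg h]
        rw [gE, Finset.mul_sum]
        exact Finset.sum_congr rfl fun J _ => by ring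
    rw [Finset.sum_congr rfl fun j _ => step1 j, Finset.sum_comm]
    refine Finset.sum_congr rfl fun J _ => ?_
    rw [← Finset.sum_mul]
    have := key_det Θ c hc J.val K J.2 hK
    rw [this]
    rw [Finset.sum_mul]
    refine Finset.sum_congr rfl fun a _ => ?_
    rw [hF]
    have : v J = W J.val := hWv J.val J.2
    rw [this]
  have rhs_eq : gE Θ m (gD c m v) ⟨K, hK⟩
      = ∑ y ∈ (univ : Finset {s : Finset (Fin n) // s.card = m}).sigma
          (fun J'' => (J''.val)ᶜ), G y := by
    rw [Finset.sum_sigma]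
    simp only [gE]
    refine Finset.sum_congr rfl fun J'' _ => ?_
    simp only [gD, Finset.mul_sum]
    have step2 : ∀ j : Fin n,
        (Matrix.of fun a b =>
            Θ (J''.val.orderEmbOfFin J''.2 a) (K.orderEmbOfFin hK b)).det *
          (if h : j ∈ J''.val then 0 else
            (-1 : R) ^ (m + (J''.val.filter (· < j)).card) * c j *
              v ⟨insert j J''.val, by rw [Finset.card_insert_of_notMem h, J''.2]⟩)
        = if j ∈ J''.val then 0 else G ⟨J'', j⟩ := by
      intro j
      by_cases h : j ∈ J''.val
      · simp [h]
      · rw [dif_neg h, if_neg h, hG]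
        rw [hWv _ (by rw [Finset.card_insert_of_notMem h, J''.2])]
    rw [Finset.sum_congr rfl fun j _ => step2 j]
    rw [show (J''.val)ᶜ = univ.filter (fun j => ¬ j ∈ J''.val) from by ext; simp,
      Finset.sum_filter]
    exact Finset.sum_congr rfl fun j _ => by rw [ite_not]
  rw [lhs_eq, rhs_eq]
  -- the reindexing bijection
  refine Finset.sum_bij'
    (i := fun (x : Σ _ : {s : Finset (Fin n) // s.card = m + 1}, Fin (m + 1)) _ =>
      (⟨⟨x.1.val.erase (x.1.val.orderEmbOfFin x.1.2 x.2),
          by rw [Finset.card_erase_of_mem (Finset.orderEmbOfFin_mem _ _ _), x.1.2]; omega⟩,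
        x.1.val.orderEmbOfFin x.1.2 x.2⟩ :
          Σ _ : {s : Finset (Fin n) // s.card = m}, Fin n))
    (j := fun y hy =>
      ⟨⟨insert y.2 y.1.val,
          by rw [Finset.card_insert_of_notMem
              (by simpa using (Finset.mem_sigma.mp hy).2), y.1.2]⟩,
        ((insert y.2 y.1.val).orderIsoOfFin
            (by rw [Finset.card_insert_of_notMem
                (by simpa using (Finset.mem_sigma.mp hy).2), y.1.2])).symm
          ⟨y.2, Finset.mem_insert_self _ _⟩⟩)
    ?_ ?_ ?_ ?_ ?_
  · -- hi : maps into B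
    intro x _
    refine Finset.mem_sigma.mpr ⟨Finset.mem_univ _, ?_⟩
    simp [Finset.mem_compl]
  · -- hj : maps into A
    intro y hy
    exact Finset.mem_sigma.mpr ⟨Finset.mem_univ _, Finset.mem_univ _⟩
  · -- left inverse
    intro x _
    obtain ⟨J, a⟩ := x
    have hmem : J.val.orderEmbOfFin J.2 a ∈ J.val := Finset.orderEmbOfFin_mem _ _ _
    have hset : insert (J.val.orderEmbOfFin J.2 a)
        (J.val.erase (J.val.orderEmbOfFin J.2 a)) = J.val := Finset.insert_erase hmem
    refine Sigma.ext (Subtype.ext hset) (heq_of_eq ?_)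
    have h2 : ∀ (hc' : (insert (J.val.orderEmbOfFin J.2 a)
          (J.val.erase (J.val.orderEmbOfFin J.2 a))).card = m + 1),
        ((insert (J.val.orderEmbOfFin J.2 a)
            (J.val.erase (J.val.orderEmbOfFin J.2 a))).orderIsoOfFin hc').symm
          ⟨J.val.orderEmbOfFin J.2 a, Finset.mem_insert_self _ _⟩ = a := by
      intro hc'
      set z := ((insert (J.val.orderEmbOfFin J.2 a)
            (J.val.erase (J.val.orderEmbOfFin J.2 a))).orderIsoOfFin hc').symm
          ⟨J.val.orderEmbOfFin J.2 a, Finset.mem_insert_self _ _⟩ with hz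
      have happ : (insert (J.val.orderEmbOfFin J.2 a)
          (J.val.erase (J.val.orderEmbOfFin J.2 a))).orderEmbOfFin hc' z
          = J.val.orderEmbOfFin J.2 a := by
        rw [hz, ← Finset.coe_orderIsoOfFin_apply, OrderIso.apply_symm_apply]
      have hcg := orderEmbOfFin_congr hset hc' J.2 z
      apply (J.val.orderEmbOfFin J.2).injective
      rw [← hcg, happ]
    exact h2 _
  · -- right inverse
    intro y hy
    obtain ⟨J'', j⟩ := y
    have hj : j ∉ J''.val := by simpa using (Finset.mem_sigma.mp hy).2
    have hcard : (insert j J''.val).card = m + 1 := by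
      rw [Finset.card_insert_of_notMem hj, J''.2]
    have hemb : (insert j J''.val).orderEmbOfFin hcard
        (((insert j J''.val).orderIsoOfFin hcard).symm ⟨j, Finset.mem_insert_self _ _⟩) = j := by
      rw [← Finset.coe_orderIsoOfFin_apply, OrderIso.apply_symm_apply]
    have h5 : ∀ z : Fin n, z = j → (insert j J''.val).erase z = J''.val := by
      rintro z rfl; exact Finset.erase_insert hj
    exact Sigma.ext (Subtype.ext (h5 _ hemb)) (heq_of_eq hemb)
  · -- values
    intro x _
    obtain ⟨J, a⟩ := x
    have hmem : J.val.orderEmbOfFin J.2 a ∈ J.val := Finset.orderEmbOfFin_mem _ _ _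
    simp only [hF, hG]
    have hdet : ∀ (pf : (J.val.erase (J.val.orderEmbOfFin J.2 a)).card = m),
        (Matrix.of fun a' b =>
          Θ ((J.val.erase (J.val.orderEmbOfFin J.2 a)).orderEmbOfFin pf a')
            (K.orderEmbOfFin hK b)).det
        = (Matrix.of fun x' b =>
            Θ (J.val.orderEmbOfFin J.2 (a.succAbove x')) (K.orderEmbOfFin hK b)).det := by
      intro pf
      congr 1
      ext a' b
      simp only [Matrix.of_apply]
      rw [orderEmbOfFin_erase J.2 a pf a']
    rw [hdet, Finset.filter_erase, Finset.erase_eq_of_notMem (by simp),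
      rank_orderEmbOfFin J.2 a, Finset.insert_erase hmem]
    ring

end MagnusChainAux


/-- For an IA-automorphism `α` of `F_n` with Magnus representation `Θ(α)`, the exterior
powers `Θ_k(α) = Λ^k Θ(α)` form a chain map of the Koszul complex of `Λ`:
`d_k ∘ Θ_k(α) = Θ_{k-1}(α) ∘ d_k` for all `1 ≤ k ≤ n`. -/
theorem magnus_extPow_chain_map (n : ℕ) (α : MulAut (FreeGroup (Fin n)))
    (hα : IsIA n α)
    (J : Fin n → Fin n → MonoidAlgebra ℤ (FreeGroup (Fin n)))
    (hJ : IsFoxJacobian n α.toMonoidHom J) :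
    ∀ m : ℕ, m + 1 ≤ n → ∀ v : KC n (m + 1),
      koszulD n m (extPow n (m + 1) (fun i j => abRing n (J i j)) v) =
        extPow n m (fun i j => abRing n (J i j)) (koszulD n m v) := by
  intro m _ v
  have hc : ∀ i : Fin n, ∑ j : Fin n, (abRing n (J i j)) * (tGen n j - 1) = tGen n i - 1 := by
    intro i
    have h1 := hJ i
    rw [IsFoxGradient] at h1
    have haug : augFree n (MonoidAlgebra.of ℤ (FreeGroup (Fin n))
        (α.toMonoidHom (FreeGroup.of i))) = 1 := by
      rw [augFree, MonoidAlgebra.lift_of]; rfl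
    rw [haug, map_one] at h1
    have h2 := congrArg (abRing n) h1
    have hab : ∀ g : FreeGroup (Fin n), abRing n (MonoidAlgebra.of ℤ (FreeGroup (Fin n)) g)
        = MonoidAlgebra.of ℤ (Abelianization (FreeGroup (Fin n))) (Abelianization.of g) := by
      intro g; simp [abRing, MonoidAlgebra.of_apply, Finsupp.mapDomain_single]
    rw [map_sub, map_one, map_sum] at h2
    simp only [map_mul, map_sub, map_one, hab] at h2
    rw [show α.toMonoidHom (FreeGroup.of i) = α (FreeGroup.of i) from rfl, hα] at h2
    simp only [tGen]
    exact h2.symm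
  exact MagnusChainAux.gChain (fun i j => abRing n (J i j)) (fun j => tGen n j - 1) hc m v
end
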